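/- Let Φ be a root system in E, let T ⊆ Φ be a special closed subset, and set S = {α ∈ Φ : α ∉ T, −α ∉ T, and T ∪ {α, −α} is closed}. Then S is a closed subset of Φ (and is symmetric, i.e., α ∈ S implies −α ∈ S). -/

import Mathlib

open scoped RealInnerProductSpace

/-- The reflection determined by a root `α`: `s_α(x) = x - (2(x,α)/(α,α)) α`. -/
noncomputable def reflectRoot {E : Type*} [NormedAddCommGroup E] [InnerProductSpace ℝ E] (α x : E) : E :=
  x - (2 * ⟪x, α⟫ / ⟪α, α⟫) • α

/-- A root system in a finite-dimensional real inner product space. -/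
def IsRootSystem {E : Type*} [NormedAddCommGroup E] [InnerProductSpace ℝ E] (Φ : Set E) : Prop :=
  Φ.Finite ∧ Submodule.span ℝ Φ = ⊤ ∧ (0 : E) ∉ Φ ∧
    (∀ α ∈ Φ, ∀ t : ℝ, t • α ∈ Φ → t • α = α ∨ t • α = -α) ∧
    (∀ α ∈ Φ, ∀ β ∈ Φ, reflectRoot α β ∈ Φ) ∧
    (∀ α ∈ Φ, ∀ β ∈ Φ, ∃ n : ℤ, 2 * ⟪β, α⟫ / ⟪α, α⟫ = (n : ℝ))

/-- `T` is a closed subset of the root system `Φ`. -/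
def IsClosedSub {E : Type*} [AddCommGroup E] (Φ T : Set E) : Prop :=
  T ⊆ Φ ∧ ∀ α ∈ T, ∀ β ∈ T, α + β ∈ Φ → α + β ∈ T

/-- The symmetric part `T^r = {α ∈ T | -α ∈ T}`. -/
def symmPart {E : Type*} [AddCommGroup E] (T : Set E) : Set E := {α ∈ T | -α ∈ T}

/-- The special part `T^u = {α ∈ T | -α ∉ T}`. -/
def specPart {E : Type*} [AddCommGroup E] (T : Set E) : Set E := {α ∈ T | -α ∉ T}

/-- `T + T`: elements of `T` that are sums of two elements of `T`. -/
def sumSet {E : Type*} [AddCommGroup E] (T : Set E) : Set E :=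
  {γ ∈ T | ∃ α ∈ T, ∃ β ∈ T, γ = α + β}

/-- The Weyl group of `Φ`: the subgroup of linear automorphisms of `E` generated by the
reflections in the roots. -/
def weylGroup {E : Type*} [NormedAddCommGroup E] [InnerProductSpace ℝ E] (Φ : Set E) :
    Subgroup (E ≃ₗ[ℝ] E) :=
  Subgroup.closure {w | ∃ α ∈ Φ, ∀ x, w x = reflectRoot α x}

/-- `Φp` is a set of positive roots of `Φ`. -/
def IsPositiveSystem {E : Type*} [NormedAddCommGroup E] [InnerProductSpace ℝ E]
    (Φ Φp : Set E) : Prop :=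
  ∃ f : E →ₗ[ℝ] ℝ, (∀ α ∈ Φ, f α ≠ 0) ∧ Φp = {α ∈ Φ | 0 < f α}

section Aux
variable {E : Type*} [NormedAddCommGroup E] [InnerProductSpace ℝ E] {Φ : Set E}

lemma RS.ne_zero (hΦ : IsRootSystem Φ) {α : E} (hα : α ∈ Φ) : α ≠ 0 :=
  fun h => hΦ.2.2.1 (h ▸ hα)

lemma RS.inner_pos (hΦ : IsRootSystem Φ) {α : E} (hα : α ∈ Φ) : 0 < ⟪α, α⟫ :=
  real_inner_self_nonneg.lt_of_ne (Ne.symm (inner_self_ne_zero.mpr (RS.ne_zero hΦ hα)))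

lemma RS.neg_mem (hΦ : IsRootSystem Φ) {α : E} (hα : α ∈ Φ) : -α ∈ Φ := by
  have h := hΦ.2.2.2.2.1 α hα α hα
  have hne : ⟪α, α⟫ ≠ 0 := (RS.inner_pos hΦ hα).ne'
  have : reflectRoot α α = -α := by
    unfold reflectRoot
    rw [show 2 * ⟪α, α⟫ / ⟪α, α⟫ = 2 by field_simp, two_smul]
    abel
  rwa [this] at h

lemma RS.no_double (hΦ : IsRootSystem Φ) {α : E} (hα : α ∈ Φ) : α + α ∉ Φ := by
  intro h
  have h2 : (2 : ℝ) • α ∈ Φ := by rw [two_smul]; exact h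
  have hα0 := RS.ne_zero hΦ hα
  rcases hΦ.2.2.2.1 α hα 2 h2 with h' | h'
  · rw [two_smul, add_eq_right] at h'
    exact hα0 h'
  · rw [two_smul] at h'
    have h3 : (3 : ℝ) • α = 0 := by
      rw [show (3:ℝ) = 1+1+1 by norm_num, add_smul, add_smul, one_smul]
      rw [h']; abel
    rcases smul_eq_zero.mp h3 with h4 | h4
    · norm_num at h4
    · exact hα0 h4

lemma RS.sub_mem (hΦ : IsRootSystem Φ) {μ ν : E} (hμ : μ ∈ Φ) (hν : ν ∈ Φ)
    (h : 0 < ⟪μ, ν⟫) : μ = ν ∨ μ - ν ∈ Φ := by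
  obtain ⟨n, hn⟩ := hΦ.2.2.2.2.2 ν hν μ hμ
  obtain ⟨m, hm⟩ := hΦ.2.2.2.2.2 μ hμ ν hν
  have hνν := RS.inner_pos hΦ hν
  have hμμ := RS.inner_pos hΦ hμ
  have hcomm : ⟪ν, μ⟫ = ⟪μ, ν⟫ := real_inner_comm μ ν
  have hn1 : 1 ≤ n := by
    have : (0:ℝ) < (n:ℝ) := by rw [← hn]; positivity
    exact_mod_cast this
  have hm1 : 1 ≤ m := by
    have : (0:ℝ) < (m:ℝ) := by rw [← hm, hcomm]; positivity
    exact_mod_cast this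
  rcases eq_or_lt_of_le hn1 with hn2 | hn2
  · right
    have h1 := hΦ.2.2.2.2.1 ν hν μ hμ
    have : reflectRoot ν μ = μ - ν := by
      unfold reflectRoot
      rw [hn, ← hn2]; push_cast; rw [one_smul]
    rwa [this] at h1
  rcases eq_or_lt_of_le hm1 with hm2 | hm2
  · right
    have h1 := hΦ.2.2.2.2.1 μ hμ ν hν
    have : reflectRoot μ ν = ν - μ := by
      unfold reflectRoot
      rw [hm, ← hm2]; push_cast; rw [one_smul]
    rw [this] at h1
    have := RS.neg_mem hΦ h1
    rwa [neg_sub] at this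
  · left
    have hn2' : (2:ℝ) ≤ (n:ℝ) := by exact_mod_cast hn2
    have hm2' : (2:ℝ) ≤ (m:ℝ) := by exact_mod_cast hm2
    have e1 : 2 * ⟪μ, ν⟫ = (n:ℝ) * ⟪ν, ν⟫ := by
      field_simp at hn; linarith [hn]
    have e2 : 2 * ⟪ν, μ⟫ = (m:ℝ) * ⟪μ, μ⟫ := by
      field_simp at hm; linarith [hm]
    have k1 : ⟪ν, ν⟫ ≤ ⟪μ, ν⟫ := by nlinarith
    have k2 : ⟪μ, μ⟫ ≤ ⟪μ, ν⟫ := by nlinarith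
    have : ⟪μ - ν, μ - ν⟫ ≤ 0 := by
      rw [real_inner_sub_sub_self]; linarith
    have := real_inner_self_nonpos.mp this
    rwa [sub_eq_zero] at this

lemma RS.add_mem (hΦ : IsRootSystem Φ) {μ ν : E} (hμ : μ ∈ Φ) (hν : ν ∈ Φ)
    (h : ⟪μ, ν⟫ < 0) : μ + ν = 0 ∨ μ + ν ∈ Φ := by
  have h' : 0 < ⟪μ, -ν⟫ := by rw [inner_neg_right]; linarith
  rcases RS.sub_mem hΦ hμ (RS.neg_mem hΦ hν) h' with h1 | h1
  · left; rw [h1]; abel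
  · right; rwa [sub_neg_eq_add] at h1

lemma RS.key (hΦ : IsRootSystem Φ) {a b c : E} (ha : a ∈ Φ) (hb : b ∈ Φ) (hc : c ∈ Φ)
    (hδ : a + b + c ∈ Φ) (hbc : b + c ≠ 0) (hab : a + b ≠ 0) (hac : a + c ≠ 0) :
    a + b ∈ Φ ∨ a + c ∈ Φ := by
  by_contra hcon
  push_neg at hcon
  obtain ⟨h1, h2⟩ := hcon
  have hab' : 0 ≤ ⟪a, b⟫ := by
    by_contra h; push_neg at h
    rcases RS.add_mem hΦ ha hb h with h' | h'
    exacts [hab h', h1 h']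
  have hac' : 0 ≤ ⟪a, c⟫ := by
    by_contra h; push_neg at h
    rcases RS.add_mem hΦ ha hc h with h' | h'
    exacts [hac h', h2 h']
  have hδb : ⟪a + b + c, b⟫ ≤ 0 := by
    by_contra h; push_neg at h
    rcases RS.sub_mem hΦ hδ hb h with h' | h'
    · exact hac (by rwa [show a + b + c = (a + c) + b by abel, add_eq_right] at h')
    · rw [show a + b + c - b = a + c by abel] at h'
      exact h2 h'
  have hδc : ⟪a + b + c, c⟫ ≤ 0 := by
    by_contra h; push_neg at h
    rcases RS.sub_mem hΦ hδ hc h with h' | h'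
    · exact hab (by rwa [show a + b + c = (a + b) + c by abel, add_eq_right] at h')
    · rw [show a + b + c - c = a + b by abel] at h'
      exact h1 h'
  have haa := RS.inner_pos hΦ ha
  have e1 : ⟪a, a + b + c⟫ = ⟪a, a⟫ + ⟪a, b⟫ + ⟪a, c⟫ := by
    rw [inner_add_right, inner_add_right]
  have e2 : ⟪a + b + c, a + b + c⟫ = ⟪a + b + c, a⟫ + ⟪a + b + c, b⟫ + ⟪a + b + c, c⟫ := by
    rw [inner_add_right, inner_add_right]
  have hcomm : ⟪a, a + b + c⟫ = ⟪a + b + c, a⟫ := real_inner_comm _ _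
  have : ⟪a + b + c - a, a + b + c - a⟫ ≤ 0 := by
    rw [real_inner_sub_sub_self]; linarith
  have := real_inner_self_nonpos.mp this
  rw [show a + b + c - a = b + c by abel] at this
  exact hbc this
end Aux

section Main
variable {E : Type*} [NormedAddCommGroup E] [InnerProductSpace ℝ E] {Φ T : Set E}

lemma RS.step (hΦ : IsRootSystem Φ) (hT : IsClosedSub Φ T) {α β x : E}
    (hα : α ∈ Φ) (hβ : β ∈ Φ)
    (hcα : IsClosedSub Φ (T ∪ {α, -α})) (hcβ : IsClosedSub Φ (T ∪ {β, -β}))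
    (hx : x ∈ T) (hxα : x + α ∈ Φ) (hsum : x + α + β ∈ Φ) : x + α + β ∈ T := by
  have hmemα : α ∈ T ∪ {α, -α} := Or.inr (by simp)
  have hmemβ : β ∈ T ∪ {β, -β} := Or.inr (by simp)
  have h1 := hcα.2 x (Or.inl hx) α hmemα hxα
  rcases h1 with h1 | h1
  · have h2 := hcβ.2 (x + α) (Or.inl h1) β hmemβ hsum
    rcases h2 with h2 | h2
    · exact h2
    · rcases h2 with h2 | h2
      · -- x + α + β = β
        have : x + α = 0 := by
          rwa [show x + α + β = (x + α) + β from rfl, add_eq_right] at h2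
        exact absurd (this ▸ hxα) hΦ.2.2.1
      · -- x + α + β = -β
        simp only [Set.mem_singleton_iff] at h2
        have h3 : x + α = -β - β := eq_sub_of_add_eq h2
        have h4 : β + β = -(x + α) := by rw [h3]; abel
        have h5 : -(x + α) ∈ Φ := RS.neg_mem hΦ hxα
        rw [← h4] at h5
        exact absurd h5 (RS.no_double hΦ hβ)
  · rcases h1 with h1 | h1
    · -- x + α = α
      rw [add_eq_right] at h1
      exact absurd (hT.1 (h1 ▸ hx)) hΦ.2.2.1
    · -- x + α = -α
      simp only [Set.mem_singleton_iff] at h1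
      have h3 : x = -α - α := eq_sub_of_add_eq h1
      have h4 : α + α = -x := by rw [h3]; abel
      have h5 : -x ∈ Φ := RS.neg_mem hΦ (hT.1 hx)
      rw [← h4] at h5
      exact absurd h5 (RS.no_double hΦ hα)

lemma RS.claim1 (hΦ : IsRootSystem Φ) (hT : IsClosedSub Φ T) {α β : E}
    (hα : α ∈ Φ) (hβ : β ∈ Φ) (hnα : -α ∉ T) (hnβ : -β ∉ T)
    (hcα : IsClosedSub Φ (T ∪ {α, -α})) (hcβ : IsClosedSub Φ (T ∪ {β, -β}))
    (hγ : α + β ∈ Φ) {x : E} (hx : x ∈ T) (hsum : x + (α + β) ∈ Φ) : x + (α + β) ∈ T := by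
  have hδ : x + α + β ∈ Φ := by rwa [add_assoc]
  have hγ0 : α + β ≠ 0 := RS.ne_zero hΦ hγ
  have hab : x + α ≠ 0 := by
    intro h
    have h' : x = -α := eq_neg_of_add_eq_zero_left h
    rw [h'] at hx; exact hnα hx
  have hac : x + β ≠ 0 := by
    intro h
    have h' : x = -β := eq_neg_of_add_eq_zero_left h
    rw [h'] at hx; exact hnβ hx
  rcases RS.key hΦ (hT.1 hx) hα hβ hδ hγ0 hab hac with h | h
  · have := RS.step hΦ hT hα hβ hcα hcβ hx h hδ
    rwa [add_assoc] at this
  · have hδ' : x + β + α ∈ Φ := by rwa [show x + β + α = x + (α + β) by abel]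
    have := RS.step hΦ hT hβ hα hcβ hcα hx h hδ'
    rwa [show x + β + α = x + (α + β) by abel] at this
end Main


/-- The set `S` of roots `α ∉ ±T` with `T ∪ {α, -α}` closed is itself a
closed, symmetric subset of `Φ`. -/
theorem symmetric_complement_closed {E : Type*} [NormedAddCommGroup E]
    [InnerProductSpace ℝ E] [FiniteDimensional ℝ E] (Φ T S : Set E)
    (hΦ : IsRootSystem Φ) (hT : IsClosedSub Φ T) (hspec : ∀ α ∈ T, -α ∉ T)
    (hS : S = {α ∈ Φ | α ∉ T ∧ -α ∉ T ∧ IsClosedSub Φ (T ∪ {α, -α})}) :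
    IsClosedSub Φ S ∧ ∀ α ∈ S, -α ∈ S := by
  subst hS
  have hΦ0 : (0 : E) ∉ Φ := hΦ.2.2.1
  constructor
  · constructor
    · intro x hx; exact hx.1
    · rintro a ⟨haΦ, haT, hanT, hca⟩ b ⟨hbΦ, hbT, hbnT, hcb⟩ hab
      have hmema : a ∈ T ∪ {a, -a} := Or.inr (by simp)
      have hmemna : -a ∈ T ∪ {a, -a} := Or.inr (by simp)
      have hγΦ := hab
      -- γ ∉ T
      have hγT : a + b ∉ T := by
        intro hγT
        have hβΦ : a + b + -a ∈ Φ := by rwa [show a + b + -a = b by abel]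
        have h := hca.2 (a + b) (Or.inl hγT) (-a) hmemna hβΦ
        rw [show a + b + -a = b by abel] at h
        rcases h with h | h | h
        · exact hbT h
        · rw [h] at hab; exact RS.no_double hΦ haΦ hab
        · simp only [Set.mem_singleton_iff] at h
          rw [h, add_neg_cancel] at hab
          exact hΦ0 hab
      -- -γ ∉ T
      have hγnT : -(a + b) ∉ T := by
        intro hγT
        have h1 : -(a + b) + a ∈ Φ := by
          rw [show -(a + b) + a = -b by abel]; exact RS.neg_mem hΦ hbΦ
        have h := hca.2 (-(a + b)) (Or.inl hγT) a hmema h1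
        rw [show -(a + b) + a = -b by abel] at h
        rcases h with h | h | h
        · exact hbnT h
        · rw [neg_eq_iff_eq_neg.mp h, add_neg_cancel] at hab
          exact hΦ0 hab
        · simp only [Set.mem_singleton_iff, neg_inj] at h
          rw [h] at hab; exact RS.no_double hΦ haΦ hab
      -- the two claims
      have c1 : ∀ x ∈ T, x + (a + b) ∈ Φ → x + (a + b) ∈ T := fun x hx h =>
        RS.claim1 hΦ hT haΦ hbΦ hanT hbnT hca hcb hab hx h
      have hca' : IsClosedSub Φ (T ∪ {-a, -(-a)}) := by
        rw [neg_neg, Set.pair_comm]; exact hca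
      have hcb' : IsClosedSub Φ (T ∪ {-b, -(-b)}) := by
        rw [neg_neg, Set.pair_comm]; exact hcb
      have hnna : -(-a) ∉ T := by rw [neg_neg]; exact haT
      have hnnb : -(-b) ∉ T := by rw [neg_neg]; exact hbT
      have hab' : -a + -b ∈ Φ := by
        rw [show -a + -b = -(a + b) by abel]; exact RS.neg_mem hΦ hab
      have c2 : ∀ x ∈ T, x + -(a + b) ∈ Φ → x + -(a + b) ∈ T := by
        intro x hx h
        have h' : x + (-a + -b) ∈ Φ := by rwa [show x + (-a + -b) = x + -(a + b) by abel]
        have := RS.claim1 hΦ hT (RS.neg_mem hΦ haΦ) (RS.neg_mem hΦ hbΦ) hnna hnnb hca' hcb'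
          hab' hx h'
        rwa [show x + (-a + -b) = x + -(a + b) by abel] at this
      refine ⟨hab, hγT, hγnT, ?_, ?_⟩
      · intro y hy
        rcases hy with hy | hy | hy
        · exact hT.1 hy
        · rw [hy]; exact hab
        · simp only [Set.mem_singleton_iff] at hy
          rw [hy]; exact RS.neg_mem hΦ hab
      · rintro x hx y hy hxy
        rcases hx with hx | hx | hx
        · rcases hy with hy | hy | hy
          · exact Or.inl (hT.2 x hx y hy hxy)
          · rw [hy] at hxy ⊢; exact Or.inl (c1 x hx hxy)
          · simp only [Set.mem_singleton_iff] at hy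
            rw [hy] at hxy ⊢; exact Or.inl (c2 x hx hxy)
        · rcases hy with hy | hy | hy
          · rw [hx] at hxy ⊢
            rw [add_comm (a + b) y] at hxy ⊢
            exact Or.inl (c1 y hy hxy)
          · rw [hx, hy] at hxy; exact absurd hxy (RS.no_double hΦ hab)
          · simp only [Set.mem_singleton_iff] at hy
            rw [hx, hy, add_neg_cancel] at hxy; exact absurd hxy hΦ0
        · simp only [Set.mem_singleton_iff] at hx
          rcases hy with hy | hy | hy
          · rw [hx] at hxy ⊢
            rw [add_comm (-(a + b)) y] at hxy ⊢
            exact Or.inl (c2 y hy hxy)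
          · rw [hx, hy, neg_add_cancel] at hxy; exact absurd hxy hΦ0
          · simp only [Set.mem_singleton_iff] at hy
            rw [hx, hy] at hxy
            exact absurd hxy (RS.no_double hΦ (RS.neg_mem hΦ hab))
  · rintro α ⟨hαΦ, hαT, hαnT, hcα⟩
    refine ⟨RS.neg_mem hΦ hαΦ, hαnT, by rwa [neg_neg], ?_⟩
    have hpair : ({-α, -(-α)} : Set E) = {α, -α} := by rw [neg_neg, Set.pair_comm]
    rw [hpair]; exact hcα
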